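/- Let W ∈ ℤ^{m×n}, g convex on W[0,1]^n with L-Lipschitz gradients and sharp with parameters μ > 0, θ ∈ [0,1] at its minimizer v* = Wx* over W[0,1]^n, where x* minimizes g(Wx) over [0,1]^n and has at most m fractional entries. Let z* ∈ {0,1}^n minimize g(Wz) over {0,1}^n. Then ‖Wz* − Wx*‖₁ ≤ μ·(m⁴·(L/4)·‖W‖_∞²)^θ. -/

import Mathlib

set_option maxHeartbeats 1000000 in
/-- Sharpness bounds the distance between the images of fractional and integral
minima: ‖Wz* − Wx*‖₁ ≤ μ(m⁴(L/4)‖W‖_∞²)^θ. -/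
theorem stmt15 (m n : ℕ) (W : Matrix (Fin m) (Fin n) ℤ) (g : (Fin m → ℝ) → ℝ)
    (L μ θ : ℝ) (hL : 0 < L) (hμ : 0 < μ) (hθ : θ ∈ Set.Icc (0:ℝ) 1)
    (P : Set (Fin m → ℝ))
    (hP : P = (fun x => (W.map (fun a => (a:ℝ))).mulVec x) '' {x | ∀ i, x i ∈ Set.Icc (0:ℝ) 1})
    (hconv : ConvexOn ℝ P g) (hdiff : Differentiable ℝ g)
    (hLip : ∀ u v : Fin m → ℝ, ∀ j : Fin m,
      |fderiv ℝ g u (Pi.single j 1) - fderiv ℝ g v (Pi.single j 1)| ≤ L * ∑ i, |u i - v i|)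
    (xs : Fin n → ℝ) (hxs : ∀ i, xs i ∈ Set.Icc (0:ℝ) 1)
    (hmin : ∀ y : Fin n → ℝ, (∀ i, y i ∈ Set.Icc (0:ℝ) 1) →
      g ((W.map (fun a => (a:ℝ))).mulVec xs) ≤ g ((W.map (fun a => (a:ℝ))).mulVec y))
    (hfrac : Set.ncard {i | xs i ≠ 0 ∧ xs i ≠ 1} ≤ m)
    (hsharp : ∀ u ∈ P, ∑ i, |u i - ((W.map (fun a => (a:ℝ))).mulVec xs) i| ≤
      μ * (g u - g ((W.map (fun a => (a:ℝ))).mulVec xs)) ^ θ)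
    (zs : Fin n → ℝ) (hzs : ∀ i, zs i = 0 ∨ zs i = 1)
    (hzmin : ∀ y : Fin n → ℝ, (∀ i, y i = 0 ∨ y i = 1) →
      g ((W.map (fun a => (a:ℝ))).mulVec zs) ≤ g ((W.map (fun a => (a:ℝ))).mulVec y)) :
    ∑ j, |((W.map (fun a => (a:ℝ))).mulVec zs) j - ((W.map (fun a => (a:ℝ))).mulVec xs) j| ≤
      μ * ((m:ℝ) ^ 4 * (L / 4) *
        ((Finset.univ.sup (fun p : Fin m × Fin n => (W p.1 p.2).natAbs) : ℕ) : ℝ) ^ 2) ^ θ := by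
  classical
  set A := W.map (fun a => (a:ℝ)) with hA
  set Bv : ℝ := ((Finset.univ.sup (fun p : Fin m × Fin n => (W p.1 p.2).natAbs) : ℕ) : ℝ)
    with hBv
  have hB0 : 0 ≤ Bv := Nat.cast_nonneg _
  have hAB : ∀ j i, |A j i| ≤ Bv := by
    intro j i
    have h1 : |A j i| = ((W j i).natAbs : ℝ) := by
      rw [Nat.cast_natAbs]; simp [hA, Matrix.map_apply]
    rw [h1, hBv]
    exact Nat.cast_le.2 (Finset.le_sup (f := fun p : Fin m × Fin n => (W p.1 p.2).natAbs)
      (Finset.mem_univ ((j, i) : Fin m × Fin n)))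
  -- the rounded point
  set z : Fin n → ℝ := fun i => if xs i ≤ 1/2 then (0:ℝ) else 1 with hz
  have hz01 : ∀ i, z i = 0 ∨ z i = 1 := by
    intro i; simp only [hz]; split
    · exact Or.inl rfl
    · exact Or.inr rfl
  have hδhalf : ∀ i, |z i - xs i| ≤ 1/2 := by
    intro i
    rcases hxs i with ⟨h0, h1⟩
    by_cases h : xs i ≤ 1/2 <;> simp only [hz, h, if_true, if_false] <;> rw [abs_le] <;>
      constructor <;> linarith
  have hδ0 : ∀ i, ¬(xs i ≠ 0 ∧ xs i ≠ 1) → z i - xs i = 0 := by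
    intro i h
    push_neg at h
    by_cases h0 : xs i = 0
    · simp [hz, h0]
    · have h1 := h h0
      simp only [hz, h1]
      norm_num
  set va := A.mulVec xs with hva
  set vb := A.mulVec z with hvb
  -- Fermat: directional derivative vanishes along fractional columns
  have hcol : ∀ i : Fin n, xs i ≠ 0 → xs i ≠ 1 →
      fderiv ℝ g va (fun j => A j i) = 0 := by
    intro i h0 h1
    set c : Fin m → ℝ := fun j => A j i with hc
    have hfun : ∀ t : ℝ, va + t • c = A.mulVec (xs + t • (Pi.single i (1:ℝ) : Fin n → ℝ)) := by
      intro t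
      rw [Matrix.mulVec_add, Matrix.mulVec_smul, Matrix.mulVec_single]
      simp [hc]
      rfl
    have hderiv : HasDerivAt (fun t : ℝ => g (va + t • c)) ((fderiv ℝ g va) c) 0 := by
      have h1' : HasDerivAt (fun t : ℝ => va + t • c) c 0 := by
        simpa using ((hasDerivAt_id (0:ℝ)).smul_const c).const_add va
      have h2 := (hdiff (va + (0:ℝ) • c)).hasFDerivAt.comp_hasDerivAt 0 h1'
      rw [zero_smul, add_zero] at h2
      exact h2
    have hxi0 : 0 < xs i := lt_of_le_of_ne (hxs i).1 (Ne.symm h0)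
    have hxi1 : xs i < 1 := lt_of_le_of_ne (hxs i).2 h1
    have hloc : IsLocalMin (fun t : ℝ => g (va + t • c)) 0 := by
      have heps : (0:ℝ) < min (xs i) (1 - xs i) := lt_min hxi0 (by linarith)
      rw [IsLocalMin, IsMinFilter, Metric.eventually_nhds_iff]
      refine ⟨min (xs i) (1 - xs i), heps, fun {t} ht => ?_⟩
      simp only [Real.dist_eq, sub_zero] at ht
      have habs := abs_lt.1 ht
      simp only [zero_smul, add_zero]
      rw [hfun t]
      apply hmin
      intro k
      by_cases hk : k = i
      · subst hk
        simp only [Pi.add_apply, Pi.smul_apply, Pi.single_eq_same, smul_eq_mul, mul_one]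
        constructor
        · have := habs.1; have := min_le_left (xs k) (1 - xs k); linarith
        · have := habs.2; have := min_le_right (xs k) (1 - xs k); linarith
      · simpa [Pi.single_eq_of_ne hk] using hxs k
    exact hloc.hasDerivAt_eq_zero hderiv
  -- gradient at va vanishes in direction vb - va
  have hd_eq : vb - va = A.mulVec (z - xs) := (Matrix.mulVec_sub A z xs).symm
  have hdec : A.mulVec (z - xs) = ∑ i, (z i - xs i) • (fun j => A j i) := by
    ext j
    simp [Matrix.mulVec, dotProduct, Finset.sum_apply, mul_comm, sub_mul]
  have hgrad0 : fderiv ℝ g va (vb - va) = 0 := by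
    rw [hd_eq, hdec, map_sum]
    apply Finset.sum_eq_zero
    intro i _
    by_cases hfr : xs i ≠ 0 ∧ xs i ≠ 1
    · rw [map_smul, hcol i hfr.1 hfr.2]; simp
    · rw [hδ0 i hfr]; simp
  -- membership of the segment in P
  have hmemP : ∀ t ∈ Set.Icc (0:ℝ) 1, va + t • (vb - va) ∈ P := by
    intro t ht
    have heq : va + t • (vb - va) = A.mulVec (xs + t • (z - xs)) := by
      rw [Matrix.mulVec_add, Matrix.mulVec_smul, ← hd_eq, hva]
    rw [heq, hP]
    refine ⟨xs + t • (z - xs), fun k => ?_, rfl⟩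
    rcases hxs k with ⟨h0, h1⟩
    rcases ht with ⟨ht0, ht1⟩
    rcases hz01 k with hk | hk <;>
      simp only [Pi.add_apply, Pi.smul_apply, Pi.sub_apply, hk, smul_eq_mul, Set.mem_Icc] <;>
      constructor <;> nlinarith
  -- convexity gradient inequality
  have hconvkey : g vb - g va ≤ fderiv ℝ g vb (vb - va) := by
    set φ : ℝ → ℝ := fun t => g (va + t • (vb - va)) with hφ
    have hφconv : ConvexOn ℝ (Set.Icc (0:ℝ) 1) φ := by
      refine ⟨convex_Icc 0 1, fun t ht s hs α β hα hβ hαβ => ?_⟩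
      have key : α • (va + t • (vb - va)) + β • (va + s • (vb - va))
          = (α + β) • va + (α * t + β * s) • (vb - va) := by module
      have h2 := hconv.2 (hmemP t ht) (hmemP s hs) hα hβ hαβ
      simp only [hφ, smul_eq_mul]
      calc g (va + (α * t + β * s) • (vb - va))
          = g (α • (va + t • (vb - va)) + β • (va + s • (vb - va))) := by
            rw [key, hαβ, one_smul]
        _ ≤ α * g (va + t • (vb - va)) + β * g (va + s • (vb - va)) := h2
    have hφd : HasDerivAt φ (fderiv ℝ g vb (vb - va)) 1 := by
      have h1 : HasDerivAt (fun t : ℝ => va + t • (vb - va)) (vb - va) 1 := by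
        simpa using ((hasDerivAt_id (1:ℝ)).smul_const (vb - va)).const_add va
      have heq : va + (1:ℝ) • (vb - va) = vb := by simp
      have h2 := (hdiff (va + (1:ℝ) • (vb - va))).hasFDerivAt.comp_hasDerivAt 1 h1
      rw [heq] at h2
      exact h2
    have hs := hφconv.slope_le_of_hasDerivAt (Set.left_mem_Icc.2 zero_le_one)
      (Set.right_mem_Icc.2 zero_le_one) zero_lt_one hφd
    rw [slope_def_field] at hs
    have h0 : φ 0 = g va := by simp [hφ]
    have h1 : φ 1 = g vb := by simp [hφ]
    rw [h0, h1] at hs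
    linarith [hs]
  -- the ℓ¹ norm of the displacement
  set S : ℝ := ∑ j, |vb j - va j| with hS
  have hS0 : 0 ≤ S := Finset.sum_nonneg fun j _ => abs_nonneg _
  -- fderiv applied to vb - va decomposes over coordinates
  have hfd : ∀ w : Fin m → ℝ,
      fderiv ℝ g w (vb - va) = ∑ j, (vb j - va j) * fderiv ℝ g w (Pi.single j 1) := by
    intro w
    have hdd : vb - va = ∑ j, (vb j - va j) • (Pi.single j (1:ℝ) : Fin m → ℝ) := by
      ext k
      simp [Finset.sum_apply, Pi.single_apply]
    rw [hdd, map_sum]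
    simp [smul_eq_mul]
  -- Lipschitz gradient bound
  have hgradbound : fderiv ℝ g vb (vb - va) ≤ L * S * S := by
    have key : fderiv ℝ g vb (vb - va)
        = ∑ j, (vb j - va j) *
            (fderiv ℝ g vb (Pi.single j 1) - fderiv ℝ g va (Pi.single j 1)) := by
      have expand : ∑ j, (vb j - va j) *
            (fderiv ℝ g vb (Pi.single j 1) - fderiv ℝ g va (Pi.single j 1))
          = (∑ j, (vb j - va j) * fderiv ℝ g vb (Pi.single j 1))
            - ∑ j, (vb j - va j) * fderiv ℝ g va (Pi.single j 1) := by
        rw [← Finset.sum_sub_distrib]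
        apply Finset.sum_congr rfl
        intro j _
        ring
      rw [expand, ← hfd vb, ← hfd va, hgrad0, sub_zero]
    rw [key]
    have step : ∀ j ∈ Finset.univ, (vb j - va j) *
        (fderiv ℝ g vb (Pi.single j 1) - fderiv ℝ g va (Pi.single j 1))
        ≤ |vb j - va j| * (L * S) := by
      intro j _
      have h1 : (vb j - va j) *
          (fderiv ℝ g vb (Pi.single j 1) - fderiv ℝ g va (Pi.single j 1))
          ≤ |vb j - va j| *
            |fderiv ℝ g vb (Pi.single j 1) - fderiv ℝ g va (Pi.single j 1)| := by
        rw [← abs_mul]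
        exact le_abs_self _
      refine h1.trans (mul_le_mul_of_nonneg_left ?_ (abs_nonneg _))
      exact hLip vb va j
    refine (Finset.sum_le_sum step).trans ?_
    rw [← Finset.sum_mul, ← hS]
    ring_nf
    exact le_refl _
  -- bound on S
  set F : Finset (Fin n) := Finset.univ.filter (fun i => xs i ≠ 0 ∧ xs i ≠ 1) with hF
  have hFm : (F.card : ℝ) ≤ (m : ℝ) := by
    have hset : {i | xs i ≠ 0 ∧ xs i ≠ 1} = (F : Set (Fin n)) := by
      ext i; simp [hF]
    rw [hset, Set.ncard_coe_finset] at hfrac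
    exact_mod_cast hfrac
  have hSbound : S ≤ (m : ℝ) * ((m : ℝ) * (Bv / 2)) := by
    have hdj : ∀ j, |vb j - va j| ≤ (F.card : ℝ) * (Bv / 2) := by
      intro j
      have hrep : vb j - va j = ∑ i, A j i * (z i - xs i) := by
        rw [hvb, hva]
        simp [Matrix.mulVec, dotProduct, mul_sub, Finset.sum_sub_distrib]
      rw [hrep]
      refine (Finset.abs_sum_le_sum_abs _ _).trans ?_
      have hterm : ∀ i ∈ Finset.univ, |A j i * (z i - xs i)|
          ≤ if i ∈ F then Bv * (1/2) else 0 := by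
        intro i _
        by_cases hfr : i ∈ F
        · rw [if_pos hfr, abs_mul]
          exact mul_le_mul (hAB j i) (hδhalf i) (abs_nonneg _) hB0
        · rw [if_neg hfr]
          have : ¬(xs i ≠ 0 ∧ xs i ≠ 1) := by
            intro hcon
            exact hfr (by simp [hF, hcon.1, hcon.2])
          rw [hδ0 i this, mul_zero, abs_zero]
      refine (Finset.sum_le_sum hterm).trans ?_
      rw [Finset.sum_ite_mem, Finset.univ_inter, Finset.sum_const, nsmul_eq_mul]
      ring_nf
      exact le_refl _
    calc S ≤ ∑ _j : Fin m, (F.card : ℝ) * (Bv / 2) :=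
          Finset.sum_le_sum fun j _ => hdj j
      _ = (m : ℝ) * ((F.card : ℝ) * (Bv / 2)) := by
          rw [Finset.sum_const, Finset.card_univ, Fintype.card_fin, nsmul_eq_mul]
      _ ≤ (m : ℝ) * ((m : ℝ) * (Bv / 2)) := by
          apply mul_le_mul_of_nonneg_left _ (Nat.cast_nonneg m)
          apply mul_le_mul_of_nonneg_right hFm (by positivity)
  -- combine: value gap at the rounded point
  clear_value S Bv
  have hgap : g vb - g va ≤ (m:ℝ) ^ 4 * (L / 4) * Bv ^ 2 := by
    have h1 : g vb - g va ≤ L * S * S := hconvkey.trans hgradbound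
    nlinarith [mul_le_mul hSbound hSbound hS0 (by positivity : (0:ℝ) ≤ (m:ℝ) * ((m:ℝ) * (Bv / 2))),
      hL.le, hS0]
  -- final assembly via sharpness
  have hzsP : A.mulVec zs ∈ P := by
    rw [hP]
    exact ⟨zs, fun i => by rcases hzs i with h | h <;> simp [h], rfl⟩
  have hzs01 : ∀ i, zs i ∈ Set.Icc (0:ℝ) 1 := by
    intro i; rcases hzs i with h | h <;> simp [h]
  have hnonneg : 0 ≤ g (A.mulVec zs) - g va := sub_nonneg.2 (hmin zs hzs01)
  have hgap2 : g (A.mulVec zs) - g va ≤ (m:ℝ) ^ 4 * (L / 4) * Bv ^ 2 := by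
    have := hzmin z hz01
    rw [← hvb] at this
    linarith
  calc ∑ j, |(A.mulVec zs) j - va j| ≤ μ * (g (A.mulVec zs) - g va) ^ θ := hsharp _ hzsP
    _ ≤ μ * ((m:ℝ) ^ 4 * (L / 4) * Bv ^ 2) ^ θ := by
        apply mul_le_mul_of_nonneg_left _ hμ.le
        exact Real.rpow_le_rpow hnonneg hgap2 hθ.1
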